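/- Let f : [0,∞) → [0,∞) be integrable, differentiable where needed, with ∫_z^∞ f > 0 for z in an interval [0,r]. If z ↦ f(z)/∫_z^∞ f(x) dx is non-decreasing on [0,r] and f(r)·r ≤ ∫_r^∞ f(x) dx, then z ↦ z·f(z) is non-decreasing on [0,r]. -/

import Mathlib

open MeasureTheory Set Filter Topology

/-- Derivative at an interior point of a function monotone on `Icc a b` is nonneg. -/
lemma monoOn_deriv_nonneg {g : ℝ → ℝ} {a b x d : ℝ} (hmono : MonotoneOn g (Set.Icc a b))
    (hx : x ∈ Set.Ioo a b) (hd : HasDerivAt g d x) : 0 ≤ d := by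
  have hslope : Tendsto (slope g x) (𝓝[>] x) (𝓝 d) := by
    have := (hd.hasDerivWithinAt (s := Set.Ioi x))
    rw [hasDerivWithinAt_iff_tendsto_slope] at this
    simpa [Set.diff_singleton_eq_self (Set.notMem_Ioi.2 le_rfl)] using this
  refine ge_of_tendsto hslope ?_
  filter_upwards [Ioo_mem_nhdsGT_of_mem ⟨le_rfl, hx.2⟩] with y hy
  have hxmem : x ∈ Set.Icc a b := ⟨hx.1.le, hx.2.le⟩
  have hymem : y ∈ Set.Icc a b := ⟨hx.1.le.trans hy.1.le, hy.2.le⟩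
  have := hmono hxmem hymem hy.1.le
  have hxy : 0 < y - x := by linarith [hy.1]
  rw [slope_def_field]
  exact div_nonneg (by linarith) hxy.le

theorem stmt_2 (f : ℝ → ℝ) (hf_nonneg : ∀ x, 0 ≤ f x)
    (hf_int : IntegrableOn f (Set.Ioi 0))
    (hf_diff : Differentiable ℝ f)
    (r : ℝ) (hr : 0 < r)
    (hpos : ∀ z ∈ Set.Icc (0:ℝ) r, 0 < ∫ x in Set.Ioi z, f x)
    (hMHR : MonotoneOn (fun z => f z / ∫ x in Set.Ioi z, f x) (Set.Icc 0 r))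
    (hlast : f r * r ≤ ∫ x in Set.Ioi r, f x) :
    MonotoneOn (fun z => z * f z) (Set.Icc 0 r) := by
  set F : ℝ → ℝ := fun z => ∫ x in Set.Ioi z, f x with hF
  have hcont : Continuous f := hf_diff.continuous
  -- F z = ∫_{Ioi 0} f - ∫_0^z f for z ≥ 0
  have hFeq : ∀ z : ℝ, 0 ≤ z → F z = (∫ x in Set.Ioi (0:ℝ), f x) - ∫ t in (0:ℝ)..z, f t := by
    intro z hz
    have hsplit : (∫ x in Set.Ioi (0:ℝ), f x)
        = (∫ x in Set.Ioc 0 z, f x) + ∫ x in Set.Ioi z, f x := by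
      rw [← MeasureTheory.setIntegral_union (Set.Ioc_disjoint_Ioi le_rfl) measurableSet_Ioi
        (hf_int.mono_set Set.Ioc_subset_Ioi_self)
        (hf_int.mono_set (Set.Ioi_subset_Ioi hz)), Set.Ioc_union_Ioi_eq_Ioi hz]
    rw [intervalIntegral.integral_of_le hz]
    simp [hF]
    linarith [hsplit]
  -- derivative of F
  have hFderiv : ∀ x ∈ Set.Ioo (0:ℝ) r, HasDerivAt F (-(f x)) x := by
    intro x hx
    have hii : IntervalIntegrable f volume 0 x := by
      rw [intervalIntegrable_iff_integrableOn_Ioc_of_le hx.1.le]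
      exact hf_int.mono_set Set.Ioc_subset_Ioi_self
    have h1 : HasDerivAt (fun z => (∫ x in Set.Ioi (0:ℝ), f x) - ∫ t in (0:ℝ)..z, f t)
        (-(f x)) x := by
      simpa [Pi.sub_def] using (hasDerivAt_const x (∫ x in Set.Ioi (0:ℝ), f x)).sub
        (intervalIntegral.integral_hasDerivAt_right hii
          (hcont.stronglyMeasurableAtFilter _ _) hcont.continuousAt)
    refine h1.congr_of_eventuallyEq ?_
    filter_upwards [Ioi_mem_nhds hx.1] with y hy
    exact hFeq y (le_of_lt hy)
  -- continuous and differentiable goal function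
  refine monotoneOn_of_deriv_nonneg (convex_Icc 0 r)
    ((continuous_id.mul hcont).continuousOn)
    ((differentiable_id.mul hf_diff).differentiableOn) ?_
  intro x hx
  rw [interior_Icc] at hx
  have hxmem : x ∈ Set.Icc (0:ℝ) r := ⟨hx.1.le, hx.2.le⟩
  have hFx : 0 < F x := hpos x hxmem
  -- derivative of hazard rate at x
  have hhd : HasDerivAt (fun z => f z / F z)
      ((deriv f x * F x - f x * (-(f x))) / (F x)^2) x :=
    (hf_diff x).hasDerivAt.div (hFderiv x hx) (ne_of_gt hFx)
  have hD : 0 ≤ (deriv f x * F x - f x * (-(f x))) / (F x)^2 :=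
    monoOn_deriv_nonneg hMHR hx hhd
  have hkey : 0 ≤ deriv f x * F x + f x * f x := by
    have := (div_nonneg_iff.mp hD)
    rcases this with ⟨h1, _⟩ | ⟨_, h2⟩
    · linarith
    · nlinarith [sq_nonneg (F x)]
  -- x * f x ≤ F x
  have hhx : f x / F x ≤ f r / F r := hMHR hxmem (Set.right_mem_Icc.2 hr.le) hx.2.le
  have hFr : 0 < F r := hpos r (Set.right_mem_Icc.2 hr.le)
  have hfr : f r / F r ≤ 1 / r := by
    rw [div_le_div_iff₀ hFr hr]
    linarith [hlast]
  have hxf : x * f x ≤ F x := by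
    have : f x / F x ≤ 1 / r := hhx.trans hfr
    rw [div_le_div_iff₀ hFx hr] at this
    nlinarith [hx.1, hx.2, hf_nonneg x, hFx]
  -- conclude
  have hderiv : deriv (fun z => z * f z) x = f x + x * deriv f x := by
    have : HasDerivAt (fun z => z * f z) (1 * f x + x * deriv f x) x :=
      (hasDerivAt_id x).mul (hf_diff x).hasDerivAt
    rw [this.deriv]; ring
  rw [hderiv]
  -- from hkey : deriv f x ≥ -f x^2 / F x and x * f x ≤ F x
  nlinarith [hf_nonneg x, hx.1, sq_nonneg (f x), mul_pos hx.1 hFx]
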